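/- For unit vectors h and positive semidefinite A, B with largest/smallest eigenvalues p ≥ q (for A) and r ≥ s (for B), |⟨h, ABh⟩ − ⟨h, Ah⟩⟨h, Bh⟩| ≤ (1/4)(p−q)(r−s). -/

import Mathlib

open Matrix ComplexOrder

lemma aux_psd {n : ℕ} (A : Matrix (Fin n) (Fin n) ℂ) (hA : A.IsHermitian) (p q : ℝ)
    (hup : ∀ i, hA.eigenvalues i ≤ p) (hlo : ∀ i, q ≤ hA.eigenvalues i) :
    (((p : ℂ) • 1 - A) * (A - (q : ℂ) • 1)).PosSemidef := by
  set U : Matrix (Fin n) (Fin n) ℂ := ↑hA.eigenvectorUnitary with hU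
  have hUU : U * star U = 1 := (Matrix.mem_unitaryGroup_iff).mp hA.eigenvectorUnitary.2
  have hUU' : star U * U = 1 := (Matrix.mem_unitaryGroup_iff').mp hA.eigenvectorUnitary.2
  have hspec := hA.spectral_theorem
  set D : Matrix (Fin n) (Fin n) ℂ := Matrix.diagonal ((RCLike.ofReal : ℝ → ℂ) ∘ hA.eigenvalues) with hD
  have e1 : (p : ℂ) • 1 - A = U * ((p : ℂ) • 1 - D) * star U := by
    rw [hspec]; simp [mul_sub, sub_mul, mul_smul_comm, smul_mul_assoc, hUU]; rfl
  have e2 : A - (q : ℂ) • 1 = U * (D - (q : ℂ) • 1) * star U := by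
    rw [hspec]; simp [mul_sub, sub_mul, mul_smul_comm, smul_mul_assoc, hUU]; rfl
  have e3 : ((p : ℂ) • 1 - A) * (A - (q : ℂ) • 1)
      = U * (((p : ℂ) • 1 - D) * (D - (q : ℂ) • 1)) * Uᴴ := by
    rw [e1, e2, ← Matrix.star_eq_conjTranspose]
    calc U * ((p : ℂ) • 1 - D) * star U * (U * (D - (q : ℂ) • 1) * star U)
        = U * ((p : ℂ) • 1 - D) * (star U * U) * (D - (q : ℂ) • 1) * star U := by
          noncomm_ring
      _ = U * (((p : ℂ) • 1 - D) * (D - (q : ℂ) • 1)) * star U := by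
          rw [hUU']; noncomm_ring
  rw [e3]
  have e4 : ((p : ℂ) • 1 - D) * (D - (q : ℂ) • 1)
      = Matrix.diagonal (fun i => (((p - hA.eigenvalues i) * (hA.eigenvalues i - q) : ℝ) : ℂ)) := by
    rw [hD, Matrix.smul_one_eq_diagonal, Matrix.smul_one_eq_diagonal, Matrix.diagonal_sub,
      Matrix.diagonal_sub, Matrix.diagonal_mul_diagonal]
    ext i j
    rcases eq_or_ne i j with rfl | hij
    · simp only [Matrix.diagonal_apply_eq, Function.comp_apply, RCLike.ofReal_alg, Complex.real_smul]; push_cast; ring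
    · simp [Matrix.diagonal_apply_ne _ hij]
  rw [e4]
  exact (Matrix.posSemidef_diagonal_iff.mpr fun i => by
    rw [Complex.zero_le_real]
    exact mul_nonneg (by linarith [hup i]) (by linarith [hlo i])).mul_mul_conjTranspose_same U

lemma aux_var {n : ℕ} (A : Matrix (Fin n) (Fin n) ℂ) (hA : A.IsHermitian) (p q : ℝ)
    (hup : ∀ i, hA.eigenvalues i ≤ p) (hlo : ∀ i, q ≤ hA.eigenvalues i) (hqp : q ≤ p)
    (h : EuclideanSpace ℂ (Fin n)) (hh : ‖h‖ = 1) :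
    ‖Matrix.toEuclideanLin A h -
      ((Complex.re (inner ℂ h (Matrix.toEuclideanLin A h) : ℂ) : ℝ) : ℂ) • h‖ ≤ (p - q) / 2 := by
  have hsym : (Matrix.toEuclideanLin A).IsSymmetric :=
    Matrix.isHermitian_iff_isSymmetric.mp hA
  set T := Matrix.toEuclideanLin A with hT
  set a : ℝ := Complex.re (inner ℂ h (T h) : ℂ) with haa
  have hhh : (inner ℂ h h : ℂ) = 1 := by
    rw [inner_self_eq_norm_sq_to_K, hh]; norm_num
  have hconj : (starRingEnd ℂ) (inner ℂ h (T h)) = inner ℂ h (T h) := by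
    rw [inner_conj_symm, hsym h h]
  have ha : (inner ℂ h (T h) : ℂ) = (a : ℂ) := (Complex.conj_eq_iff_re.mp hconj).symm
  have hTh : (inner ℂ (T h) h : ℂ) = (a : ℂ) := by rw [hsym h h, ha]
  have hmulapp : ∀ (M N : Matrix (Fin n) (Fin n) ℂ) (v : EuclideanSpace ℂ (Fin n)),
      Matrix.toEuclideanLin (M * N) v = Matrix.toEuclideanLin M (Matrix.toEuclideanLin N v) := by
    intro M N v
    simp [Matrix.toEuclideanLin_apply, Matrix.mulVec_mulVec]
  set c : ℝ := (p + q) / 2 with hc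
  have horth : (inner ℂ (T h - (a:ℂ) • h) (((a:ℂ) - (c:ℂ)) • h) : ℂ) = 0 := by
    rw [inner_smul_right, inner_sub_left, inner_smul_left, hhh, hTh, Complex.conj_ofReal]
    ring
  have key1 : ‖T h - (c:ℂ) • h‖^2
      = ‖T h - (a:ℂ) • h‖^2 + 2 * Complex.re (inner ℂ (T h - (a:ℂ)•h) (((a:ℂ) - (c:ℂ)) • h) : ℂ)
        + ‖((a:ℂ) - (c:ℂ)) • h‖^2 := by
    rw [show T h - (c:ℂ) • h = (T h - (a:ℂ) • h) + ((a:ℂ) - (c:ℂ)) • h by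
      rw [sub_smul]; abel]
    exact norm_add_sq (𝕜 := ℂ) _ _
  have key2 : ‖T h - (a:ℂ) • h‖^2 ≤ ‖T h - (c:ℂ) • h‖^2 := by
    rw [key1, horth]
    simp only [Complex.zero_re, mul_zero, add_zero]
    nlinarith [sq_nonneg ‖((a:ℂ) - (c:ℂ)) • h‖]
  -- now bound ‖T h - c • h‖^2 by ((p-q)/2)^2
  have hC : (A - (c:ℂ) • 1).IsHermitian := by
    apply hA.sub
    unfold Matrix.IsHermitian
    simp [Matrix.conjTranspose_smul, Complex.star_def, Complex.conj_ofReal]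
  have hCsym : (Matrix.toEuclideanLin (A - (c:ℂ) • 1)).IsSymmetric :=
    Matrix.isHermitian_iff_isSymmetric.mp hC
  have h1 : Matrix.toEuclideanLin (1 : Matrix (Fin n) (Fin n) ℂ) h = h := by
    apply (WithLp.equiv 2 _).injective
    simp [Matrix.toEuclideanLin_apply, Matrix.one_mulVec]
  have hTc : T h - (c:ℂ) • h = Matrix.toEuclideanLin (A - (c:ℂ) • 1) h := by
    rw [map_sub, _root_.map_smul, LinearMap.sub_apply, LinearMap.smul_apply, h1, hT]
  have hsq : ‖T h - (c:ℂ) • h‖^2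
      = Complex.re (inner ℂ h (Matrix.toEuclideanLin ((A - (c:ℂ)•1) * (A - (c:ℂ)•1)) h) : ℂ) := by
    rw [hTc, hmulapp, ← hCsym h (Matrix.toEuclideanLin (A - (c:ℂ)•1) h),
      ← inner_self_eq_norm_sq (𝕜 := ℂ)]
    rfl
  have hM := aux_psd A hA p q hup hlo
  have hnn : 0 ≤ Complex.re
      (inner ℂ h (Matrix.toEuclideanLin (((p:ℂ) • 1 - A) * (A - (q:ℂ) • 1)) h) : ℂ) := by
    have h2 := hM.re_dotProduct_nonneg ((WithLp.equiv 2 _) h)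
    have heq : (inner ℂ h (Matrix.toEuclideanLin (((p:ℂ)•1 - A) * (A - (q:ℂ)•1)) h) : ℂ)
        = dotProduct (star ((WithLp.equiv 2 _) h))
          (((((p:ℂ)•1 - A) * (A - (q:ℂ)•1))) *ᵥ ((WithLp.equiv 2 _) h)) := by
        rw [EuclideanSpace.inner_eq_star_dotProduct, dotProduct_comm]; rfl
    rw [heq]
    exact h2
  have hMident : ((p:ℂ) • 1 - A) * (A - (q:ℂ) • 1)
      = ((((p - q)/2 : ℝ)^2 : ℝ) : ℂ) • 1 - (A - (c:ℂ) • 1) * (A - (c:ℂ) • 1) := by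
    rw [hc]
    simp only [mul_sub, sub_mul, smul_mul_assoc, mul_smul_comm, one_mul, mul_one, smul_smul]
    push_cast
    module
  have hval : Complex.re
      (inner ℂ h (Matrix.toEuclideanLin (((p:ℂ) • 1 - A) * (A - (q:ℂ) • 1)) h) : ℂ)
      = ((p - q)/2)^2 - ‖T h - (c:ℂ) • h‖^2 := by
    rw [hMident, hsq, map_sub, _root_.map_smul, LinearMap.sub_apply, LinearMap.smul_apply, h1,
      inner_sub_right, inner_smul_right, hhh]
    simp [inner_sub_right]
    rw [show (((p : ℂ) - (q : ℂ)) / 2) ^ 2 = ((((p - q) / 2) ^ 2 : ℝ) : ℂ) by push_cast; ring,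
      Complex.ofReal_re]
  have key3 : ‖T h - (c:ℂ) • h‖^2 ≤ ((p - q)/2)^2 := by
    rw [hval] at hnn; linarith
  have hd : (0:ℝ) ≤ (p - q)/2 := by linarith
  nlinarith [norm_nonneg (T h - (a:ℂ) • h), key2, key3]

theorem variance_covariance_inequality {n : ℕ} (A B : Matrix (Fin n) (Fin n) ℂ)
    (hA : A.PosSemidef) (hB : B.PosSemidef) (p q r s : ℝ)
    (hp : IsGreatest (Set.range hA.1.eigenvalues) p)
    (hq : IsLeast (Set.range hA.1.eigenvalues) q)
    (hr : IsGreatest (Set.range hB.1.eigenvalues) r)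
    (hs : IsLeast (Set.range hB.1.eigenvalues) s)
    (h : EuclideanSpace ℂ (Fin n)) (hh : ‖h‖ = 1) :
    ‖(inner ℂ h (Matrix.toEuclideanLin (A * B) h) : ℂ) -
        (inner ℂ h (Matrix.toEuclideanLin A h) : ℂ) *
          (inner ℂ h (Matrix.toEuclideanLin B h) : ℂ)‖ ≤
      (1 / 4) * (p - q) * (r - s) := by
  have hupA : ∀ i, hA.1.eigenvalues i ≤ p := fun i => hp.2 ⟨i, rfl⟩
  have hloA : ∀ i, q ≤ hA.1.eigenvalues i := fun i => hq.2 ⟨i, rfl⟩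
  have hupB : ∀ i, hB.1.eigenvalues i ≤ r := fun i => hr.2 ⟨i, rfl⟩
  have hloB : ∀ i, s ≤ hB.1.eigenvalues i := fun i => hs.2 ⟨i, rfl⟩
  have hqp : q ≤ p := hq.2 hp.1
  have hsr : s ≤ r := hs.2 hr.1
  have hsymA : (Matrix.toEuclideanLin A).IsSymmetric :=
    Matrix.isHermitian_iff_isSymmetric.mp hA.1
  have hsymB : (Matrix.toEuclideanLin B).IsSymmetric :=
    Matrix.isHermitian_iff_isSymmetric.mp hB.1
  have hu := aux_var A hA.1 p q hupA hloA hqp h hh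
  have hv := aux_var B hB.1 r s hupB hloB hsr h hh
  set T := Matrix.toEuclideanLin A with hT
  set S := Matrix.toEuclideanLin B with hS
  set a : ℝ := Complex.re (inner ℂ h (T h) : ℂ) with haa
  set b : ℝ := Complex.re (inner ℂ h (S h) : ℂ) with hbb
  have hhh : (inner ℂ h h : ℂ) = 1 := by rw [inner_self_eq_norm_sq_to_K, hh]; norm_num
  have ha : (inner ℂ h (T h) : ℂ) = (a:ℂ) :=
    (Complex.conj_eq_iff_re.mp (by rw [inner_conj_symm, hsymA h h])).symm
  have hb : (inner ℂ h (S h) : ℂ) = (b:ℂ) :=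
    (Complex.conj_eq_iff_re.mp (by rw [inner_conj_symm, hsymB h h])).symm
  have hTh : (inner ℂ (T h) h : ℂ) = (a:ℂ) := by rw [hsymA h h, ha]
  have hmulapp : Matrix.toEuclideanLin (A * B) h = T (S h) := by
    rw [hT, hS]
    apply (WithLp.equiv 2 _).injective
    simp [Matrix.toEuclideanLin_apply, Matrix.mulVec_mulVec]
  have hcov : (inner ℂ h (Matrix.toEuclideanLin (A * B) h) : ℂ)
      - (inner ℂ h (T h) : ℂ) * (inner ℂ h (S h) : ℂ)
      = (inner ℂ (T h - (a:ℂ) • h) (S h - (b:ℂ) • h) : ℂ) := by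
    rw [hmulapp, ← hsymA h (S h)]
    simp only [inner_sub_left, inner_sub_right, inner_smul_left, inner_smul_right, hhh, hTh,
      ha, hb, Complex.conj_ofReal, mul_one]
    ring
  rw [hcov]
  refine le_trans (norm_inner_le_norm _ _) ?_
  have hfin := mul_le_mul hu hv (norm_nonneg _) (by linarith : (0:ℝ) ≤ (p - q)/2)
  refine le_trans hfin (le_of_eq (by ring))
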